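/- arXiv:2201.12973 — 5 statements merged into one kernel-verified Lean document; each statement's English description precedes it below -/
import Mathlib

section
/- Fix integers k, P ≥ 1, scalars c_i ∈ ℝ, vectors b^(i) ∈ ℝ^k with all components nonnegative for i = 1,…,P, and a vector z^(0) ∈ ℝ^k. Define G : [0,1)^k → ℝ^P componentwise by G_i(a) = c_i · ∏_{j=1}^k exp( −b_j^(i)·( a_j/(1−a_j) + z_j^(0) ) ). Then G is L-Lipschitz on [0,1)^k with respect to the Euclidean norms, with L = √(Pk)·max_{i,j} L_{i,j}, where L_{i,j} = |c_i|·b_j^(i)·exp(−(b^(i))ᵀ z^(0))·g(b_j^(i)) if b_j^(i) > 0, L_{i,j} = 0 if b_j^(i) = 0, and g(b) = 1 for b ≥ 2 while g(b) = (4/b²)·e^{b−2} for 0 < b < 2. -/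
noncomputable section

/-- Euclidean norm of a vector in `ℝ^n`. -/
def norm2 {n : ℕ} (x : Fin n → ℝ) : ℝ := Real.sqrt (∑ i, x i ^ 2)

/-- The box `[0,1)^k`. -/
def box (k : ℕ) : Set (Fin k → ℝ) := {a | ∀ j, a j ∈ Set.Ico (0 : ℝ) 1}

/-- The auxiliary function `g` of Lemma `G-Lip`: `g(b) = 1` for `b ≥ 2`, and
`g(b) = (4/b²) e^{b-2}` for `0 < b < 2`. -/
def gaux (b : ℝ) : ℝ := if 2 ≤ b then 1 else 4 / b ^ 2 * Real.exp (b - 2)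

lemma gaux_nonneg (b : ℝ) : 0 ≤ gaux b := by
  unfold gaux; split
  · norm_num
  · positivity

lemma gaux_key {b t : ℝ} (hb : 0 < b) (ht : 0 ≤ t) :
    (1 + t) ^ 2 * Real.exp (-(b * t)) ≤ gaux b := by
  unfold gaux
  rw [Real.exp_neg, mul_inv_le_iff₀ (Real.exp_pos _)]
  split_ifs with h
  · rw [one_mul]
    have h1 : (1 + t) ^ 2 ≤ Real.exp t ^ 2 := by
      have := Real.add_one_le_exp t
      nlinarith [Real.exp_pos t]
    calc (1 + t) ^ 2 ≤ Real.exp t ^ 2 := h1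
      _ = Real.exp (2 * t) := by rw [← Real.exp_nat_mul]; norm_num
      _ ≤ Real.exp (b * t) := Real.exp_le_exp.2 (by nlinarith)
  · push_neg at h
    set s := b * (1 + t) / 2 with hsdef
    have hs : 0 < s := by positivity
    have key : s ≤ Real.exp (s - 1) := by
      have := Real.add_one_le_exp (s - 1); linarith
    have key2 : s ^ 2 ≤ Real.exp (s - 1) ^ 2 := by nlinarith [Real.exp_pos (s - 1)]
    have e1 : Real.exp (s - 1) ^ 2 = Real.exp (b - 2) * Real.exp (b * t) := by
      rw [← Real.exp_nat_mul, ← Real.exp_add]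
      congr 1; rw [hsdef]; push_cast; ring
    have final : s ^ 2 ≤ Real.exp (b - 2) * Real.exp (b * t) := e1 ▸ key2
    have hbne : (b : ℝ) ≠ 0 := ne_of_gt hb
    have heq : (1 + t) ^ 2 = 4 / b ^ 2 * s ^ 2 := by
      rw [hsdef]; field_simp; ring
    calc (1 + t) ^ 2 = 4 / b ^ 2 * s ^ 2 := heq
      _ ≤ 4 / b ^ 2 * (Real.exp (b - 2) * Real.exp (b * t)) := by
          apply mul_le_mul_of_nonneg_left final (by positivity)
      _ = 4 / b ^ 2 * Real.exp (b - 2) * Real.exp (b * t) := by ring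

lemma psi_hasDerivAt (bb z : ℝ) {x : ℝ} (hx : x < 1) :
    HasDerivAt (fun x => Real.exp (-(bb * (x / (1 - x) + z))))
      (Real.exp (-(bb * (x / (1 - x) + z))) * (-(bb * (1 / (1 - x) ^ 2)))) x := by
  have hne : (1 - x) ≠ 0 := by intro h; linarith [sub_eq_zero.mp h]
  have h1 : HasDerivAt (fun x : ℝ => x / (1 - x)) (1 / (1 - x) ^ 2) x := by
    have hc : HasDerivAt (fun x : ℝ => x) 1 x := hasDerivAt_id x
    have hd : HasDerivAt (fun x : ℝ => 1 - x) (-1) x := by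
      simpa using (hasDerivAt_id x).const_sub 1
    have := hc.div hd hne
    exact this.congr_deriv (by ring)
  have h2 : HasDerivAt (fun x : ℝ => -(bb * (x / (1 - x) + z)))
      (-(bb * (1 / (1 - x) ^ 2))) x := ((h1.add_const z).const_mul bb).neg
  exact h2.exp

lemma psi_deriv_bound (bb z : ℝ) (hb : 0 ≤ bb) {w : ℝ} (hw0 : 0 ≤ w) (hw1 : w < 1) :
    ‖Real.exp (-(bb * (w / (1 - w) + z))) * (-(bb * (1 / (1 - w) ^ 2)))‖ ≤
      bb * Real.exp (-(bb * z)) * gaux bb := by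
  have h1w : 0 < 1 - w := by linarith
  set t := w / (1 - w) with htdef
  have ht : 0 ≤ t := div_nonneg hw0 (le_of_lt h1w)
  have hinv : 1 / (1 - w) ^ 2 = (1 + t) ^ 2 := by
    rw [htdef]; field_simp; ring
  rcases eq_or_lt_of_le hb with hb0 | hbpos
  · simp [← hb0]
  · have heq : ‖Real.exp (-(bb * (t + z))) * (-(bb * (1 / (1 - w) ^ 2)))‖
        = bb * Real.exp (-(bb * z)) * ((1 + t) ^ 2 * Real.exp (-(bb * t))) := by
      rw [Real.norm_eq_abs, abs_mul, abs_neg,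
        abs_of_pos (Real.exp_pos _),
        abs_of_nonneg (by positivity : (0:ℝ) ≤ bb * (1 / (1 - w) ^ 2)), hinv,
        show -(bb * (t + z)) = -(bb * t) + -(bb * z) by ring, Real.exp_add]
      ring
    rw [heq]
    exact mul_le_mul_of_nonneg_left (gaux_key hbpos ht) (by positivity)

lemma psi_lip (bb z : ℝ) (hb : 0 ≤ bb) {x y : ℝ}
    (hx : x ∈ Set.Ico (0:ℝ) 1) (hy : y ∈ Set.Ico (0:ℝ) 1) :
    |Real.exp (-(bb * (x / (1 - x) + z))) - Real.exp (-(bb * (y / (1 - y) + z)))| ≤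
      bb * Real.exp (-(bb * z)) * gaux bb * |x - y| := by
  have derivs : ∀ w ∈ Set.Ico (0:ℝ) 1,
      HasDerivWithinAt (fun x => Real.exp (-(bb * (x / (1 - x) + z))))
        (Real.exp (-(bb * (w / (1 - w) + z))) * (-(bb * (1 / (1 - w) ^ 2)))) (Set.Ico (0:ℝ) 1) w :=
    fun w hw => (psi_hasDerivAt bb z hw.2).hasDerivWithinAt
  have bound : ∀ w ∈ Set.Ico (0:ℝ) 1,
      ‖Real.exp (-(bb * (w / (1 - w) + z))) * (-(bb * (1 / (1 - w) ^ 2)))‖ ≤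
        bb * Real.exp (-(bb * z)) * gaux bb :=
    fun w hw => psi_deriv_bound bb z hb hw.1 hw.2
  have := Convex.norm_image_sub_le_of_norm_hasDerivWithin_le derivs bound (convex_Ico 0 1) hy hx
  simpa [Real.norm_eq_abs] using this

lemma prod_sub_prod_le {ι : Type*} [DecidableEq ι] (f g B K : ι → ℝ) :
    ∀ (s : Finset ι), (∀ j ∈ s, |f j| ≤ B j) → (∀ j ∈ s, |g j| ≤ B j) →
    (∀ j ∈ s, |f j - g j| ≤ K j) →
    |∏ j ∈ s, f j - ∏ j ∈ s, g j| ≤ ∑ j ∈ s, K j * ∏ m ∈ s.erase j, B m := by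
  intro s
  induction s using Finset.induction_on with
  | empty => intro _ _ _; simp
  | @insert a s ha ih =>
    intro hfB hgB hK
    have hfB' := fun j hj => hfB j (Finset.mem_insert_of_mem hj)
    have hgB' := fun j hj => hgB j (Finset.mem_insert_of_mem hj)
    have hK' := fun j hj => hK j (Finset.mem_insert_of_mem hj)
    have ihs := ih hfB' hgB' hK'
    have hFB : |∏ j ∈ s, f j| ≤ ∏ j ∈ s, B j := by
      rw [Finset.abs_prod]
      exact Finset.prod_le_prod (fun j _ => abs_nonneg _) hfB'
    rw [Finset.prod_insert ha, Finset.prod_insert ha, Finset.sum_insert ha]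
    have step1 : |f a * ∏ j ∈ s, f j - g a * ∏ j ∈ s, g j|
        ≤ |f a - g a| * |∏ j ∈ s, f j| + |g a| * |∏ j ∈ s, f j - ∏ j ∈ s, g j| := by
      have h : f a * ∏ j ∈ s, f j - g a * ∏ j ∈ s, g j
          = (f a - g a) * ∏ j ∈ s, f j + g a * (∏ j ∈ s, f j - ∏ j ∈ s, g j) := by ring
      rw [h]
      calc _ ≤ |(f a - g a) * ∏ j ∈ s, f j| + |g a * (∏ j ∈ s, f j - ∏ j ∈ s, g j)| :=
            abs_add_le _ _
        _ = _ := by rw [abs_mul, abs_mul]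
    have t1 : |f a - g a| * |∏ j ∈ s, f j| ≤ K a * ∏ j ∈ s, B j :=
      mul_le_mul (hK a (Finset.mem_insert_self a s)) hFB (abs_nonneg _)
        (le_trans (abs_nonneg _) (hK a (Finset.mem_insert_self a s)))
    have t2 : |g a| * |∏ j ∈ s, f j - ∏ j ∈ s, g j|
        ≤ B a * ∑ j ∈ s, K j * ∏ m ∈ s.erase j, B m :=
      mul_le_mul (hgB a (Finset.mem_insert_self a s)) ihs (abs_nonneg _)
        (le_trans (abs_nonneg _) (hgB a (Finset.mem_insert_self a s)))
    have e1 : (insert a s).erase a = s := Finset.erase_insert ha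
    have e2 : B a * ∑ j ∈ s, K j * ∏ m ∈ s.erase j, B m
        = ∑ j ∈ s, K j * ∏ m ∈ (insert a s).erase j, B m := by
      rw [Finset.mul_sum]
      apply Finset.sum_congr rfl
      intro j hj
      have hja : a ≠ j := fun h => ha (h ▸ hj)
      rw [Finset.erase_insert_of_ne hja,
        Finset.prod_insert (fun h => ha (Finset.mem_of_mem_erase h))]
      ring
    calc |f a * ∏ j ∈ s, f j - g a * ∏ j ∈ s, g j|
        ≤ |f a - g a| * |∏ j ∈ s, f j| + |g a| * |∏ j ∈ s, f j - ∏ j ∈ s, g j| := step1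
      _ ≤ K a * ∏ j ∈ s, B j + B a * ∑ j ∈ s, K j * ∏ m ∈ s.erase j, B m := add_le_add t1 t2
      _ = K a * ∏ m ∈ (insert a s).erase a, B m
          + ∑ j ∈ s, K j * ∏ m ∈ (insert a s).erase j, B m := by rw [e1, e2]

/-- Lemma `G-Lip`: the exponential-decay generative model
`G_i(a) = c_i ∏_j exp(-b_j^{(i)} (a_j/(1-a_j) + z_j^{(0)}))` is `L`-Lipschitz on
`[0,1)^k` with `L = √(Pk) max_{i,j} L_{i,j}`. -/
theorem stmt_6 {k P : ℕ} (hk : 1 ≤ k) (hP : 1 ≤ P)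
    (c : Fin P → ℝ) (b : Fin P → Fin k → ℝ) (hb : ∀ i j, 0 ≤ b i j)
    (z₀ : Fin k → ℝ)
    (G : (Fin k → ℝ) → Fin P → ℝ)
    (hG : ∀ a i, G a i = c i * ∏ j, Real.exp (-(b i j * (a j / (1 - a j) + z₀ j))))
    (L : Fin P → Fin k → ℝ)
    (hL : ∀ i j, L i j =
      if 0 < b i j then
        |c i| * b i j * Real.exp (-(∑ m, b i m * z₀ m)) * gaux (b i j)
      else 0) :
    ∀ a₁ ∈ box k, ∀ a₂ ∈ box k,
      norm2 (G a₁ - G a₂) ≤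
        Real.sqrt ((P : ℝ) * k) * (⨆ ij : Fin P × Fin k, L ij.1 ij.2) *
          norm2 (a₁ - a₂) := by
  intro a₁ h₁ a₂ h₂
  set Lmax := ⨆ ij : Fin P × Fin k, L ij.1 ij.2 with hLmax
  have hbdd : BddAbove (Set.range fun ij : Fin P × Fin k => L ij.1 ij.2) :=
    Set.Finite.bddAbove (Set.finite_range _)
  have hLle : ∀ i j, L i j ≤ Lmax := fun i j => le_ciSup hbdd (i, j)
  have hLnn : ∀ i j, 0 ≤ L i j := by
    intro i j; rw [hL]
    split_ifs
    · exact mul_nonneg (by positivity) (gaux_nonneg _)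
    · exact le_rfl
  have hLmax_nn : 0 ≤ Lmax :=
    le_trans (hLnn ⟨0, hP⟩ ⟨0, hk⟩) (hLle ⟨0, hP⟩ ⟨0, hk⟩)
  set Δn := norm2 (a₁ - a₂) with hΔn
  have hΔn_nn : 0 ≤ Δn := Real.sqrt_nonneg _
  -- Cauchy–Schwarz
  have hCS : ∑ j, |a₁ j - a₂ j| ≤ Real.sqrt k * Δn := by
    have h2 := Finset.sum_mul_sq_le_sq_mul_sq Finset.univ
      (fun j : Fin k => |a₁ j - a₂ j|) (fun _ => (1:ℝ))
    simp only [mul_one, one_pow, Finset.sum_const, Finset.card_univ, Fintype.card_fin,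
      nsmul_eq_mul, sq_abs] at h2
    have hS : (0:ℝ) ≤ ∑ j, |a₁ j - a₂ j| :=
      Finset.sum_nonneg fun j _ => abs_nonneg _
    have hΔn2 : Δn = Real.sqrt (∑ j, (a₁ j - a₂ j) ^ 2) := by
      rw [hΔn]; unfold norm2; simp [Pi.sub_apply]
    calc ∑ j, |a₁ j - a₂ j|
        = Real.sqrt ((∑ j, |a₁ j - a₂ j|) ^ 2) := (Real.sqrt_sq hS).symm
      _ ≤ Real.sqrt ((∑ j, (a₁ j - a₂ j) ^ 2) * k) := Real.sqrt_le_sqrt h2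
      _ = Real.sqrt k * Δn := by
          rw [mul_comm, Real.sqrt_mul (Nat.cast_nonneg k), hΔn2]
  -- coordinatewise bound
  have key : ∀ i, |G a₁ i - G a₂ i| ≤ Lmax * ∑ j, |a₁ j - a₂ j| := by
    intro i
    rw [hG, hG, ← mul_sub, abs_mul]
    set f := fun j => Real.exp (-(b i j * (a₁ j / (1 - a₁ j) + z₀ j))) with hf
    set g := fun j => Real.exp (-(b i j * (a₂ j / (1 - a₂ j) + z₀ j))) with hgdef
    set B := fun j => Real.exp (-(b i j * z₀ j)) with hB
    set K := fun j => b i j * Real.exp (-(b i j * z₀ j)) * gaux (b i j) * |a₁ j - a₂ j|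
      with hKdef
    have habs : ∀ (a : Fin k → ℝ), (∀ j, a j ∈ Set.Ico (0:ℝ) 1) →
        ∀ j, |Real.exp (-(b i j * (a j / (1 - a j) + z₀ j)))| ≤ B j := by
      intro a ha j
      rw [abs_of_pos (Real.exp_pos _), hB]
      apply Real.exp_le_exp.2
      have ht : 0 ≤ a j / (1 - a j) :=
        div_nonneg (ha j).1 (by linarith [(ha j).2])
      nlinarith [mul_nonneg (hb i j) ht]
    have hfB : ∀ j ∈ Finset.univ, |f j| ≤ B j := fun j _ => habs a₁ h₁ j
    have hgB : ∀ j ∈ Finset.univ, |g j| ≤ B j := fun j _ => habs a₂ h₂ j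
    have hK : ∀ j ∈ Finset.univ, |f j - g j| ≤ K j :=
      fun j _ => psi_lip (b i j) (z₀ j) (hb i j) (h₁ j) (h₂ j)
    have hmain := prod_sub_prod_le f g B K Finset.univ hfB hgB hK
    have term : ∀ j, |c i| * (K j * ∏ m ∈ Finset.univ.erase j, B m)
        = L i j * |a₁ j - a₂ j| := by
      intro j
      rcases eq_or_lt_of_le (hb i j) with h0 | hpos
      · rw [hL]
        simp [← h0, hKdef]
      · rw [hL, if_pos hpos, hKdef]
        have hprod : B j * ∏ m ∈ Finset.univ.erase j, B m
            = Real.exp (-(∑ m, b i m * z₀ m)) := by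
          rw [Finset.mul_prod_erase Finset.univ B (Finset.mem_univ j), hB]
          rw [← Real.exp_sum]
          congr 1
          rw [← Finset.sum_neg_distrib]
        rw [hB] at hprod
        calc |c i| * (b i j * Real.exp (-(b i j * z₀ j)) * gaux (b i j) * |a₁ j - a₂ j|
              * ∏ m ∈ Finset.univ.erase j, B m)
            = |c i| * b i j * (Real.exp (-(b i j * z₀ j))
              * ∏ m ∈ Finset.univ.erase j, B m) * gaux (b i j) * |a₁ j - a₂ j| := by ring
          _ = _ := by rw [hprod]
    calc |c i| * |∏ j, f j - ∏ j, g j|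
        ≤ |c i| * ∑ j, K j * ∏ m ∈ Finset.univ.erase j, B m :=
          mul_le_mul_of_nonneg_left hmain (abs_nonneg _)
      _ = ∑ j, L i j * |a₁ j - a₂ j| := by
          rw [Finset.mul_sum]
          exact Finset.sum_congr rfl fun j _ => term j
      _ ≤ ∑ j, Lmax * |a₁ j - a₂ j| :=
          Finset.sum_le_sum fun j _ =>
            mul_le_mul_of_nonneg_right (hLle i j) (abs_nonneg _)
      _ = Lmax * ∑ j, |a₁ j - a₂ j| := by rw [Finset.mul_sum]
  -- assemble
  set C := Lmax * (Real.sqrt k * Δn) with hC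
  have hC_nn : 0 ≤ C := by positivity
  have keyC : ∀ i, |G a₁ i - G a₂ i| ≤ C := fun i =>
    le_trans (key i) (mul_le_mul_of_nonneg_left hCS hLmax_nn)
  have step : norm2 (G a₁ - G a₂) ≤ Real.sqrt ((P : ℝ) * C ^ 2) := by
    unfold norm2
    apply Real.sqrt_le_sqrt
    calc ∑ i, (G a₁ - G a₂) i ^ 2
        = ∑ i, (G a₁ i - G a₂ i) ^ 2 := by simp [Pi.sub_apply]
      _ ≤ ∑ _i : Fin P, C ^ 2 := Finset.sum_le_sum fun i _ => by
          rw [← sq_abs]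
          exact pow_le_pow_left₀ (abs_nonneg _) (keyC i) 2
      _ = (P : ℝ) * C ^ 2 := by
          simp [Finset.sum_const, Finset.card_univ, nsmul_eq_mul]
  calc norm2 (G a₁ - G a₂) ≤ Real.sqrt ((P : ℝ) * C ^ 2) := step
    _ = Real.sqrt P * C := by
        rw [Real.sqrt_mul (Nat.cast_nonneg P), Real.sqrt_sq hC_nn]
    _ = Real.sqrt ((P : ℝ) * k) * Lmax * Δn := by
        rw [Real.sqrt_mul (Nat.cast_nonneg P), hC]; ring
end
end

section
/- Let g(b) = 1 for b ≥ 2 and g(b) = (4/b²)·e^{b−2} for 0 < b < 2. Then for every real p ≥ 2 and every b with log(2) ≤ b ≤ p, one has b·g(b) ≤ p. Consequently, if G : [0,1)^k → ℝ^P is given by G_i(a) = c_i · ∏_{j=1}^k exp( −b_j^(i)·a_j/(1−a_j) ), where |c_i| ≤ 1 and each nonzero component b_j^(i) lies in the interval [log(2), p] for some p ≥ 2, then G is L-Lipschitz on [0,1)^k with L ≤ p·√(Pk). -/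
noncomputable section

open Finset

-- `2 e^{b-2} ≤ b` for `log 2 ≤ b ≤ 2`, by convexity of `exp`.
lemma aux1 (b : ℝ) (h1 : Real.log 2 ≤ b) (h2 : b ≤ 2) : 2 * Real.exp (b - 2) ≤ b := by
  have hlg : (0.6931471803 : ℝ) < Real.log 2 := Real.log_two_gt_d9
  have hden : (0:ℝ) < 2 - Real.log 2 := by nlinarith [Real.log_two_lt_d9]
  set lam : ℝ := (b - Real.log 2) / (2 - Real.log 2) with hlam
  have hlam0 : 0 ≤ lam := div_nonneg (by linarith) hden.le
  have hlam1 : lam ≤ 1 := (div_le_one hden).2 (by linarith)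
  have hconv := convexOn_exp.2 (Set.mem_univ (Real.log 2 - 2)) (Set.mem_univ (0:ℝ))
      (by linarith : (0:ℝ) ≤ 1 - lam) hlam0 (by ring)
  simp only [smul_eq_mul, mul_zero, add_zero, Real.exp_zero, mul_one] at hconv
  have harg : (1 - lam) * (Real.log 2 - 2) = b - 2 := by
    have hl : lam * (2 - Real.log 2) = b - Real.log 2 := by rw [hlam]; exact div_mul_cancel₀ _ hden.ne'
    linear_combination hl
  rw [harg] at hconv
  have hval : Real.exp (Real.log 2 - 2) = 2 / (Real.exp 1 ^ 2) := by
    rw [Real.exp_sub, Real.exp_log (by norm_num : (0:ℝ) < 2)]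
    congr 1
    rw [show (2:ℝ) = 1 + 1 by norm_num, Real.exp_add]
    ring
  rw [hval] at hconv
  have he : (2.7182818283 : ℝ) < Real.exp 1 := Real.exp_one_gt_d9
  have hb : b = (1 - lam) * Real.log 2 + lam * 2 := by
    have hl : lam * (2 - Real.log 2) = b - Real.log 2 := by rw [hlam]; exact div_mul_cancel₀ _ hden.ne'
    linear_combination -hl
  have hkey : 4 / Real.exp 1 ^ 2 ≤ Real.log 2 := by
    rw [div_le_iff₀ (by positivity)]
    nlinarith
  calc 2 * Real.exp (b - 2) ≤ 2 * ((1 - lam) * (2 / Real.exp 1 ^ 2) + lam) := by linarith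
    _ = (1 - lam) * (4 / Real.exp 1 ^ 2) + lam * 2 := by ring
    _ ≤ (1 - lam) * Real.log 2 + lam * 2 := by nlinarith
    _ = b := hb.symm

lemma hb0 {b : ℝ} (h1 : Real.log 2 ≤ b) : 0 < b :=
  lt_of_lt_of_le (Real.log_pos one_lt_two) h1

-- the key derivative bound
lemma key (p b s : ℝ) (hp : 2 ≤ p) (h1 : Real.log 2 ≤ b) (h2 : b ≤ p) (hs : 0 ≤ s) :
    b * ((1 + s) ^ 2 * Real.exp (-(b * s))) ≤ p := by
  have hb : 0 < b := hb0 h1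
  by_cases h2b : 2 ≤ b
  · have hes : 1 + s ≤ Real.exp s := by linarith [Real.add_one_le_exp s]
    have h1s : (0:ℝ) ≤ 1 + s := by linarith
    have hsq : (1 + s) ^ 2 ≤ Real.exp s ^ 2 := by nlinarith
    have hsq2 : Real.exp s ^ 2 = Real.exp (2 * s) := by
      rw [← Real.exp_nat_mul]; norm_num
    have hmono : Real.exp (2 * s) ≤ Real.exp (b * s) :=
      Real.exp_le_exp.2 (by nlinarith)
    have hle1 : (1 + s) ^ 2 * Real.exp (-(b * s)) ≤ 1 := by
      rw [Real.exp_neg]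
      rw [mul_inv_le_iff₀ (Real.exp_pos _), one_mul]
      calc (1+s)^2 ≤ Real.exp (2*s) := by rw [← hsq2]; exact hsq
        _ ≤ Real.exp (b*s) := hmono
    nlinarith [Real.exp_pos (-(b*s)), sq_nonneg (1+s)]
  · push_neg at h2b
    set u : ℝ := b * (1 + s) with hu
    have hu0 : 0 < u := by nlinarith
    have h1u : u / 2 ≤ Real.exp ((u - 2) / 2) := by
      have := Real.add_one_le_exp ((u - 2) / 2)
      linarith
    have hsqe : Real.exp ((u - 2) / 2) ^ 2 = Real.exp (u - 2) := by
      rw [← Real.exp_nat_mul]; ring_nf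
    have h2u : u ^ 2 ≤ 4 * Real.exp (u - 2) := by
      nlinarith [Real.exp_pos ((u-2)/2)]
    -- expression = (u^2 / b) * exp(b - u) = (4/b) e^{b-2} * (u²/4 e^{2-u})
    have hexp : Real.exp (-(b * s)) = Real.exp (b - 2) * Real.exp (2 - u) := by
      rw [← Real.exp_add]; congr 1; rw [hu]; ring
    have hA : 2 * Real.exp (b - 2) ≤ b := aux1 b h1 h2b.le
    have hB : u ^ 2 * Real.exp (2 - u) ≤ 4 := by
      have h := mul_le_mul_of_nonneg_right h2u (Real.exp_pos (2 - u)).le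
      have : Real.exp (u - 2) * Real.exp (2 - u) = 1 := by
        rw [← Real.exp_add]; ring_nf; exact Real.exp_zero
      nlinarith
    have hrw : b * ((1 + s) ^ 2 * Real.exp (-(b * s)))
        = (u ^ 2 * Real.exp (2 - u)) * Real.exp (b - 2) / b := by
      rw [hexp, hu]; field_simp
    rw [hrw]
    rw [div_le_iff₀ hb]
    have hE : (0:ℝ) < Real.exp (b - 2) := Real.exp_pos _
    nlinarith [mul_le_mul_of_nonneg_right hB hE.le]

-- per-coordinate Lipschitz bound
lemma coord (p b : ℝ) (hp : 2 ≤ p) (hb : b = 0 ∨ (Real.log 2 ≤ b ∧ b ≤ p))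
    (x y : ℝ) (hx : x ∈ Set.Ico (0:ℝ) 1) (hy : y ∈ Set.Ico (0:ℝ) 1) :
    |Real.exp (-(b * (x / (1 - x)))) - Real.exp (-(b * (y / (1 - y))))| ≤ p * |x - y| := by
  rcases hb with rfl | ⟨h1, h2⟩
  · simp
    positivity
  · set f : ℝ → ℝ := fun t => Real.exp (-(b * (t / (1 - t)))) with hf
    set f' : ℝ → ℝ := fun t => Real.exp (-(b * (t / (1 - t)))) * (-(b * (1 / (1 - t) ^ 2))) with hf'
    have hderiv : ∀ t ∈ Set.Ico (0:ℝ) 1, HasDerivWithinAt f (f' t) (Set.Ico (0:ℝ) 1) t := by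
      intro t ht
      have hne : (1 - t) ≠ 0 := by
        have := ht.2; intro h; rw [sub_eq_zero] at h; linarith
      have hd1 : HasDerivAt (fun t : ℝ => t / (1 - t)) (1 / (1 - t) ^ 2) t := by
        have h := (hasDerivAt_id' t).div ((hasDerivAt_id' t).const_sub 1) hne
        exact h.congr_deriv (by ring)
      have hd2 : HasDerivAt (fun t : ℝ => -(b * (t / (1 - t)))) (-(b * (1 / (1 - t) ^ 2))) t :=
        (hd1.const_mul b).neg
      exact hd2.exp.hasDerivWithinAt
    have hbound : ∀ t ∈ Set.Ico (0:ℝ) 1, ‖f' t‖ ≤ p := by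
      intro t ht
      have h1t : 0 < 1 - t := by linarith [ht.2]
      have hbpos : 0 < b := hb0 h1
      set s : ℝ := t / (1 - t) with hs
      have hs0 : 0 ≤ s := div_nonneg ht.1 h1t.le
      have h1s : 1 + s = 1 / (1 - t) := by
        rw [hs]; field_simp; ring
      have hrw : ‖f' t‖ = b * ((1 + s) ^ 2 * Real.exp (-(b * s))) := by
        rw [hf']
        simp only [Real.norm_eq_abs, abs_mul, abs_neg, Real.abs_exp]
        rw [abs_of_pos hbpos, abs_of_pos (by positivity : (0:ℝ) < 1 / (1 - t) ^ 2)]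
        rw [show (1:ℝ) / (1 - t) ^ 2 = (1 + s) ^ 2 by rw [h1s, div_pow, one_pow]]
        rw [hs]
        ring
      rw [hrw]
      exact key p b s hp h1 h2 hs0
    have := (convex_Ico (0:ℝ) 1).norm_image_sub_le_of_norm_hasDerivWithin_le
      hderiv hbound hy hx
    simpa [Real.norm_eq_abs] using this

-- product difference bound
lemma prod_diff : ∀ (k : ℕ) (f g : Fin k → ℝ),
    (∀ j, 0 ≤ f j ∧ f j ≤ 1) → (∀ j, 0 ≤ g j ∧ g j ≤ 1) →
    |∏ j, f j - ∏ j, g j| ≤ ∑ j, |f j - g j| := by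
  intro k
  induction k with
  | zero => intro f g _ _; simp
  | succ n ih =>
    intro f g hf hg
    rw [Fin.prod_univ_succ, Fin.prod_univ_succ, Fin.sum_univ_succ]
    have ihk := ih (fun j => f j.succ) (fun j => g j.succ)
      (fun j => hf j.succ) (fun j => hg j.succ)
    set F := ∏ j : Fin n, f j.succ with hF
    set Gp := ∏ j : Fin n, g j.succ with hGp
    have hF0 : 0 ≤ F := Finset.prod_nonneg fun j _ => (hf j.succ).1
    have hF1 : F ≤ 1 := Finset.prod_le_one (fun j _ => (hf j.succ).1) (fun j _ => (hf j.succ).2)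
    have hg0 := (hg 0).1
    have hg1 := (hg 0).2
    calc |f 0 * F - g 0 * Gp| = |(f 0 - g 0) * F + g 0 * (F - Gp)| := by congr 1; ring
      _ ≤ |(f 0 - g 0) * F| + |g 0 * (F - Gp)| := abs_add_le _ _
      _ = |f 0 - g 0| * |F| + |g 0| * |F - Gp| := by rw [abs_mul, abs_mul]
      _ ≤ |f 0 - g 0| * 1 + 1 * |F - Gp| := by
          gcongr
          · rw [abs_of_nonneg hF0]; exact hF1
          · rw [abs_of_nonneg hg0]; exact hg1
      _ = |f 0 - g 0| + |F - Gp| := by ring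
      _ ≤ |f 0 - g 0| + ∑ j : Fin n, |f j.succ - g j.succ| := by linarith

-- Cauchy-Schwarz: sum of abs ≤ sqrt k * norm2
lemma cs (k : ℕ) (x : Fin k → ℝ) : ∑ j, |x j| ≤ Real.sqrt k * norm2 x := by
  have h := sq_sum_le_card_mul_sum_sq (s := Finset.univ) (f := fun j => |x j|)
  simp only [Finset.card_univ, Fintype.card_fin, sq_abs] at h
  have h1 : (∑ j, |x j|) ^ 2 ≤ (k : ℝ) * ∑ j, x j ^ 2 := by exact_mod_cast h
  have h2 : ∑ j, |x j| = Real.sqrt ((∑ j, |x j|) ^ 2) :=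
    (Real.sqrt_sq (Finset.sum_nonneg fun j _ => abs_nonneg _)).symm
  rw [h2, norm2, ← Real.sqrt_mul (Nat.cast_nonneg k)]
  exact Real.sqrt_le_sqrt h1

/-- For every `p ≥ 2` and `log 2 ≤ b ≤ p` one has `b·g(b) ≤ p`;
consequently the generative model `G_i(a) = c_i ∏_j exp(-b_j^{(i)} a_j/(1-a_j))`
with `|c_i| ≤ 1` and nonzero exponents in `[log 2, p]` is `L`-Lipschitz on `[0,1)^k`
with `L ≤ p √(Pk)`. -/
theorem stmt_7 :
    (∀ p b : ℝ, 2 ≤ p → Real.log 2 ≤ b → b ≤ p → b * gaux b ≤ p) ∧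
    (∀ (k P : ℕ) (c : Fin P → ℝ) (b : Fin P → Fin k → ℝ)
      (G : (Fin k → ℝ) → Fin P → ℝ) (p : ℝ),
      2 ≤ p →
      (∀ i, |c i| ≤ 1) →
      (∀ i j, 0 ≤ b i j) →
      (∀ i j, b i j ≠ 0 → Real.log 2 ≤ b i j ∧ b i j ≤ p) →
      (∀ a i, G a i = c i * ∏ j, Real.exp (-(b i j * (a j / (1 - a j))))) →
      ∀ a₁ ∈ box k, ∀ a₂ ∈ box k,
        norm2 (G a₁ - G a₂) ≤ p * Real.sqrt ((P : ℝ) * k) * norm2 (a₁ - a₂)) := by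
  constructor
  · intro p b hp h1 h2
    unfold gaux
    split_ifs with h
    · simpa using h2
    · push_neg at h
      have hb : 0 < b := hb0 h1
      have hA := aux1 b h1 h.le
      have hrw : b * (4 / b ^ 2 * Real.exp (b - 2)) = 4 * Real.exp (b - 2) / b := by
        field_simp
      rw [hrw, div_le_iff₀ hb]
      nlinarith
  · intro k P c b G p hp hc hbnn hbr hG a₁ ha₁ a₂ ha₂
    set N := norm2 (a₁ - a₂) with hN
    have hN0 : 0 ≤ N := Real.sqrt_nonneg _
    have hk0 : (0:ℝ) ≤ Real.sqrt k := Real.sqrt_nonneg _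
    set M : ℝ := p * (Real.sqrt k * N) with hM
    have hM0 : 0 ≤ M := by positivity
    have hd : ∀ i, |G a₁ i - G a₂ i| ≤ M := by
      intro i
      rw [hG, hG]
      have hbound : ∀ (a : Fin k → ℝ), a ∈ _root_.box k → ∀ j,
          0 ≤ Real.exp (-(b i j * (a j / (1 - a j)))) ∧
          Real.exp (-(b i j * (a j / (1 - a j)))) ≤ 1 := by
        intro a ha j
        refine ⟨(Real.exp_pos _).le, Real.exp_le_one_iff.2 ?_⟩
        have h1 := (ha j).1
        have h2 := (ha j).2
        have : 0 ≤ a j / (1 - a j) := div_nonneg h1 (by linarith)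
        have := mul_nonneg (hbnn i j) this
        linarith
      have hpd := prod_diff k (fun j => Real.exp (-(b i j * (a₁ j / (1 - a₁ j)))))
        (fun j => Real.exp (-(b i j * (a₂ j / (1 - a₂ j)))))
        (hbound a₁ ha₁) (hbound a₂ ha₂)
      have hcoord : ∀ j, |Real.exp (-(b i j * (a₁ j / (1 - a₁ j)))) -
          Real.exp (-(b i j * (a₂ j / (1 - a₂ j))))| ≤ p * |a₁ j - a₂ j| := by
        intro j
        apply coord p (b i j) hp _ _ _ (ha₁ j) (ha₂ j)
        by_cases h : b i j = 0
        · exact Or.inl h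
        · exact Or.inr (hbr i j h)
      have hsum : ∑ j, |Real.exp (-(b i j * (a₁ j / (1 - a₁ j)))) -
          Real.exp (-(b i j * (a₂ j / (1 - a₂ j))))| ≤ p * ∑ j, |a₁ j - a₂ j| := by
        rw [Finset.mul_sum]
        exact Finset.sum_le_sum fun j _ => hcoord j
      have hcs : ∑ j, |a₁ j - a₂ j| ≤ Real.sqrt k * N := by
        have := cs k (a₁ - a₂)
        simpa [hN] using this
      calc |c i * ∏ j, Real.exp (-(b i j * (a₁ j / (1 - a₁ j)))) -
            c i * ∏ j, Real.exp (-(b i j * (a₂ j / (1 - a₂ j))))|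
          = |c i| * |∏ j, Real.exp (-(b i j * (a₁ j / (1 - a₁ j)))) -
            ∏ j, Real.exp (-(b i j * (a₂ j / (1 - a₂ j))))| := by
            rw [← abs_mul, mul_sub]
        _ ≤ 1 * (∑ j, |Real.exp (-(b i j * (a₁ j / (1 - a₁ j)))) -
            Real.exp (-(b i j * (a₂ j / (1 - a₂ j))))|) := by
            apply mul_le_mul (hc i) hpd (abs_nonneg _) zero_le_one
        _ ≤ 1 * (p * (Real.sqrt k * N)) := by
            rw [one_mul, one_mul]
            calc ∑ j, |Real.exp (-(b i j * (a₁ j / (1 - a₁ j)))) -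
                Real.exp (-(b i j * (a₂ j / (1 - a₂ j))))| ≤ p * ∑ j, |a₁ j - a₂ j| := hsum
              _ ≤ p * (Real.sqrt k * N) := by
                  apply mul_le_mul_of_nonneg_left hcs (by linarith)
        _ = M := by rw [one_mul]
    have hsq : ∑ i, ((G a₁ - G a₂) i) ^ 2 ≤ (P : ℝ) * M ^ 2 := by
      calc ∑ i, ((G a₁ - G a₂) i) ^ 2 ≤ ∑ _i : Fin P, M ^ 2 := by
            apply Finset.sum_le_sum
            intro i _
            have := hd i
            have h2 : |(G a₁ - G a₂) i| ≤ M := by simpa [Pi.sub_apply] using this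
            nlinarith [abs_nonneg ((G a₁ - G a₂) i), sq_abs ((G a₁ - G a₂) i)]
        _ = (P : ℝ) * M ^ 2 := by
            rw [Finset.sum_const, Finset.card_univ, Fintype.card_fin, nsmul_eq_mul]
    calc norm2 (G a₁ - G a₂) ≤ Real.sqrt ((P : ℝ) * M ^ 2) := Real.sqrt_le_sqrt hsq
      _ = Real.sqrt P * M := by
          rw [Real.sqrt_mul (Nat.cast_nonneg P), Real.sqrt_sq hM0]
      _ = p * Real.sqrt ((P : ℝ) * k) * N := by
          rw [Real.sqrt_mul (Nat.cast_nonneg P)]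
          ring
end
end

section
/- Let S ⊆ ℝ^P, γ > 0, δ ≥ 0, and let A ∈ ℝ^{N×P} be a matrix that (i) satisfies the S-REC(S, γ, δ) and (ii) satisfies ‖Az‖₂ ≤ 2‖z‖₂ for all z ∈ ℝ^P. For any x* ∈ ℝ^P and η ∈ ℝ^N, let u = A x* + η. If x̂ ∈ S and ε > 0 satisfy ‖u − A x̂‖₂ ≤ inf_{x ∈ S} ‖u − A x‖₂ + ε, then ‖x̂ − x*‖₂ ≤ (4/γ + 1)·inf_{x ∈ S} ‖x* − x‖₂ + 2‖η‖₂/γ + ε/γ + δ/γ. -/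
noncomputable section

/-- Set-Restricted Eigenvalue Condition: `‖A(x₁-x₂)‖₂ ≥ γ‖x₁-x₂‖₂ - δ` for all `x₁,x₂ ∈ S`. -/
def SREC {N P : ℕ} (A : Matrix (Fin N) (Fin P) ℝ) (S : Set (Fin P → ℝ)) (γ δ : ℝ) : Prop :=
  ∀ x₁ ∈ S, ∀ x₂ ∈ S, γ * norm2 (x₁ - x₂) - δ ≤ norm2 (A.mulVec (x₁ - x₂))

lemma norm2_eq {n : ℕ} (x : Fin n → ℝ) :
    norm2 x = ‖(WithLp.equiv 2 (Fin n → ℝ)).symm x‖ := by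
  rw [EuclideanSpace.norm_eq]
  simp [norm2, Real.norm_eq_abs, sq_abs]

lemma norm2_nonneg {n : ℕ} (x : Fin n → ℝ) : 0 ≤ norm2 x :=
  Real.sqrt_nonneg _

lemma norm2_add_le {n : ℕ} (x y : Fin n → ℝ) :
    norm2 (x + y) ≤ norm2 x + norm2 y := by
  simp only [norm2_eq, WithLp.equiv_symm_apply, WithLp.toLp_add]
  exact norm_add_le _ _

lemma norm2_sub_comm {n : ℕ} (x y : Fin n → ℝ) :
    norm2 (x - y) = norm2 (y - x) := by
  simp only [norm2_eq, WithLp.equiv_symm_apply, WithLp.toLp_sub]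
  exact norm_sub_rev _ _

/-- Lemma 4.3 of Bora et al., deterministic form. -/
theorem stmt_11 {N P : ℕ} (S : Set (Fin P → ℝ)) (γ δ : ℝ) (hγ : 0 < γ) (hδ : 0 ≤ δ)
    (A : Matrix (Fin N) (Fin P) ℝ)
    (hSREC : SREC A S γ δ)
    (hA : ∀ z : Fin P → ℝ, norm2 (A.mulVec z) ≤ 2 * norm2 z)
    (xstar : Fin P → ℝ) (η : Fin N → ℝ) (u : Fin N → ℝ)
    (hu : u = A.mulVec xstar + η)
    (xhat : Fin P → ℝ) (hxhat : xhat ∈ S) (ε : ℝ) (hε : 0 < ε)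
    (hopt : norm2 (u - A.mulVec xhat) ≤
      sInf ((fun x => norm2 (u - A.mulVec x)) '' S) + ε) :
    norm2 (xhat - xstar) ≤
      (4 / γ + 1) * sInf ((fun x => norm2 (xstar - x)) '' S)
        + 2 * norm2 η / γ + ε / γ + δ / γ := by
  set k : ℝ := 4 / γ + 1 with hk
  have hkpos : 0 < k := by positivity
  set C : ℝ := 2 * norm2 η / γ + ε / γ + δ / γ with hC
  -- key pointwise estimate
  have key : ∀ x ∈ S, norm2 (xhat - xstar) ≤ k * norm2 (xstar - x) + C := by
    intro x hx
    have hbdd : BddBelow ((fun x => norm2 (u - A.mulVec x)) '' S) := by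
      refine ⟨0, ?_⟩
      rintro t ⟨y, _, rfl⟩
      exact norm2_nonneg _
    have hInf_le : sInf ((fun x => norm2 (u - A.mulVec x)) '' S) ≤ norm2 (u - A.mulVec x) :=
      csInf_le hbdd ⟨x, hx, rfl⟩
    have h4 : norm2 (u - A.mulVec xhat) ≤ norm2 (u - A.mulVec x) + ε := by linarith
    have h5 : norm2 (u - A.mulVec x) ≤ 2 * norm2 (xstar - x) + norm2 η := by
      have : u - A.mulVec x = A.mulVec (xstar - x) + η := by
        rw [hu, Matrix.mulVec_sub]; abel
      rw [this]
      calc norm2 (A.mulVec (xstar - x) + η)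
          ≤ norm2 (A.mulVec (xstar - x)) + norm2 η := norm2_add_le _ _
        _ ≤ 2 * norm2 (xstar - x) + norm2 η := by linarith [hA (xstar - x)]
    have h1 : γ * norm2 (xhat - x) - δ ≤ norm2 (A.mulVec (xhat - x)) :=
      hSREC xhat hxhat x hx
    have h2 : norm2 (A.mulVec (xhat - x)) ≤
        norm2 (u - A.mulVec xhat) + norm2 (u - A.mulVec x) := by
      have : A.mulVec (xhat - x) = -(u - A.mulVec xhat) + (u - A.mulVec x) := by
        rw [Matrix.mulVec_sub]; abel
      rw [this]
      calc norm2 (-(u - A.mulVec xhat) + (u - A.mulVec x))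
          ≤ norm2 (-(u - A.mulVec xhat)) + norm2 (u - A.mulVec x) := norm2_add_le _ _
        _ = norm2 (u - A.mulVec xhat) + norm2 (u - A.mulVec x) := by
            congr 1
            have := norm2_sub_comm (A.mulVec xhat) u
            simpa [neg_sub] using this
    have hγn : γ * norm2 (xhat - x) ≤ 4 * norm2 (xstar - x) + 2 * norm2 η + ε + δ := by
      linarith
    have htri : norm2 (xhat - xstar) ≤ norm2 (xhat - x) + norm2 (xstar - x) := by
      have : xhat - xstar = (xhat - x) + (x - xstar) := by abel
      rw [this]
      calc norm2 ((xhat - x) + (x - xstar))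
          ≤ norm2 (xhat - x) + norm2 (x - xstar) := norm2_add_le _ _
        _ = norm2 (xhat - x) + norm2 (xstar - x) := by rw [norm2_sub_comm x xstar]
    have hdiv : norm2 (xhat - x) ≤ (4 * norm2 (xstar - x) + 2 * norm2 η + ε + δ) / γ := by
      rw [le_div_iff₀ hγ]; linarith [mul_comm (norm2 (xhat - x)) γ]
    have hexp : (4 * norm2 (xstar - x) + 2 * norm2 η + ε + δ) / γ
        = 4 / γ * norm2 (xstar - x) + 2 * norm2 η / γ + ε / γ + δ / γ := by
      field_simp
    rw [hk, hC]
    calc norm2 (xhat - xstar) ≤ norm2 (xhat - x) + norm2 (xstar - x) := htri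
      _ ≤ (4 * norm2 (xstar - x) + 2 * norm2 η + ε + δ) / γ + norm2 (xstar - x) := by
          linarith
      _ = (4 / γ + 1) * norm2 (xstar - x) + (2 * norm2 η / γ + ε / γ + δ / γ) := by
          rw [hexp]; ring
  -- pass to the infimum
  have hne : ((fun x => norm2 (xstar - x)) '' S).Nonempty := ⟨_, ⟨xhat, hxhat, rfl⟩⟩
  have hle : (norm2 (xhat - xstar) - C) / k ≤ sInf ((fun x => norm2 (xstar - x)) '' S) := by
    apply le_csInf hne
    rintro t ⟨x, hx, rfl⟩
    rw [div_le_iff₀ hkpos]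
    have := key x hx
    linarith [mul_comm ((fun x => norm2 (xstar - x)) x) k]
  have hfin := (div_le_iff₀ hkpos).mp hle
  rw [hk, hC] at hfin
  have hmn : (0:ℝ) ≤ sInf ((fun x => norm2 (xstar - x)) '' S) := by
    apply Real.sInf_nonneg
    rintro t ⟨x, hx, rfl⟩
    exact norm2_nonneg _
  nlinarith [hfin, hmn]
end
end

section
/- Let A be an N×P random matrix whose entries are independent Gaussian random variables with mean 0 and variance 1/N. Then for every fixed nonzero x ∈ ℝ^P and every ε ≥ 0: if 0 ≤ ε ≤ 1, then P( |‖Ax‖₂²/‖x‖₂² − 1| ≥ ε ) ≤ 2·e^{−Nε²/8}; and if ε > 1, then P( |‖Ax‖₂²/‖x‖₂² − 1| ≥ ε ) ≤ 2·e^{−Nε/8}. -/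
open MeasureTheory ProbabilityTheory

noncomputable section

/-- Law of a random `N × P` matrix with i.i.d. `N(0, 1/N)` entries: the product of
Gaussian measures over the index set. -/
def gaussianMatrixMeasure (N P : ℕ) : Measure (Fin N × Fin P → ℝ) :=
  Measure.pi fun _ => gaussianReal 0 (N : NNReal)⁻¹

namespace Stmt12

open Real
open scoped NNReal ENNReal

lemma pdf_mul_pdf (a b : ℝ≥0) (ha : a ≠ 0) (hb : b ≠ 0) (x z : ℝ) :
    gaussianPDFReal 0 a x * gaussianPDFReal x b z
      = gaussianPDFReal 0 (a + b) z
        * gaussianPDFReal (((a : ℝ) / ((a : ℝ) + (b : ℝ))) * z) (a * b / (a + b)) x := by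
  have ha' : (0:ℝ) < a := lt_of_le_of_ne a.coe_nonneg (by exact_mod_cast ha.symm)
  have hb' : (0:ℝ) < b := lt_of_le_of_ne b.coe_nonneg (by exact_mod_cast hb.symm)
  have hab : (0:ℝ) < (a:ℝ) + b := by linarith
  have hc : ((a * b / (a + b) : ℝ≥0) : ℝ) = (a:ℝ) * b / ((a:ℝ) + b) := by
    push_cast [NNReal.coe_div]
    ring
  have hc' : (0:ℝ) < ((a * b / (a + b) : ℝ≥0) : ℝ) := by
    rw [hc]; positivity
  simp only [gaussianPDFReal, NNReal.coe_add, hc]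
  rw [mul_mul_mul_comm, mul_mul_mul_comm ((√(2 * π * ((a:ℝ) + b)))⁻¹)]
  congr 1
  · rw [← mul_inv, ← mul_inv, ← Real.sqrt_mul (by positivity), ← Real.sqrt_mul (by positivity)]
    congr 2
    field_simp
  · rw [← Real.exp_add, ← Real.exp_add]
    congr 1
    field_simp
    ring



lemma measurable_pdf2 (b : ℝ≥0) : Measurable fun p : ℝ × ℝ => gaussianPDF p.1 b p.2 := by
  unfold gaussianPDF gaussianPDFReal
  exact ((((measurable_snd.sub measurable_fst).pow_const 2).neg.div_const _).exp.const_mul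
    _).ennreal_ofReal

lemma gaussian_conv (a b : ℝ≥0) :
    Measure.map (fun p : ℝ × ℝ => p.1 + p.2) ((gaussianReal 0 a).prod (gaussianReal 0 b))
      = gaussianReal 0 (a + b) := by
  by_cases ha : a = 0
  · subst ha
    rw [gaussianReal_zero_var, Measure.dirac_prod,
      Measure.map_map measurable_add measurable_prodMk_left]
    have : ((fun p : ℝ × ℝ => p.1 + p.2) ∘ Prod.mk (0:ℝ)) = id := by
      funext y; simp
    rw [this, Measure.map_id, zero_add]
  by_cases hb : b = 0
  · subst hb
    rw [gaussianReal_zero_var, Measure.prod_dirac,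
      Measure.map_map measurable_add measurable_prodMk_right]
    have : ((fun p : ℝ × ℝ => p.1 + p.2) ∘ (fun x : ℝ => (x, (0:ℝ)))) = id := by
      funext y; simp
    rw [this, Measure.map_id, add_zero]
  have hab : a + b ≠ 0 := by
    intro h
    exact ha (by simpa using congrArg (·) h ▸ (add_eq_zero.mp h).1)
  set c : ℝ≥0 := a * b / (a + b) with hc
  have hcne : c ≠ 0 := by
    simp only [hc, ne_eq, div_eq_zero_iff, mul_eq_zero, not_or]
    exact ⟨⟨ha, hb⟩, hab⟩
  ext s hs
  rw [Measure.map_apply measurable_add hs, Measure.prod_apply (measurable_add hs)]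
  have key : ∀ x : ℝ, (gaussianReal 0 b) (Prod.mk x ⁻¹' ((fun p : ℝ × ℝ => p.1 + p.2) ⁻¹' s))
      = ∫⁻ z in s, gaussianPDF x b z := by
    intro x
    have h1 : Prod.mk x ⁻¹' ((fun p : ℝ × ℝ => p.1 + p.2) ⁻¹' s) = (fun y => x + y) ⁻¹' s := rfl
    rw [h1, ← Measure.map_apply (measurable_const_add x) hs, gaussianReal_map_const_add,
      zero_add, gaussianReal_apply _ hb]
  simp_rw [key]
  have hmf : Measurable fun x : ℝ => ∫⁻ z in s, gaussianPDF x b z :=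
    (measurable_pdf2 b).lintegral_prod_right'
  rw [gaussianReal_of_var_ne_zero _ ha,
    lintegral_withDensity_eq_lintegral_mul _ (measurable_gaussianPDF 0 a) hmf]
  simp only [Pi.mul_apply]
  have hswap : (∫⁻ x, gaussianPDF 0 a x * ∫⁻ z in s, gaussianPDF x b z)
      = ∫⁻ z in s, ∫⁻ x, gaussianPDF 0 a x * gaussianPDF x b z := by
    have hpt : ∀ x : ℝ, gaussianPDF 0 a x * ∫⁻ z in s, gaussianPDF x b z
        = ∫⁻ z in s, gaussianPDF 0 a x * gaussianPDF x b z := fun x =>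
      (lintegral_const_mul _ ((measurable_pdf2 b).comp measurable_prodMk_left)).symm
    simp_rw [hpt]
    exact lintegral_lintegral_swap
      (((measurable_gaussianPDF 0 a).comp measurable_fst).mul (measurable_pdf2 b)).aemeasurable
  rw [hswap]
  have hinner : ∀ z : ℝ, (∫⁻ x, gaussianPDF 0 a x * gaussianPDF x b z)
      = gaussianPDF 0 (a + b) z := by
    intro z
    have h1 : ∀ x, gaussianPDF 0 a x * gaussianPDF x b z
        = ENNReal.ofReal (gaussianPDFReal 0 (a + b) z)
          * ENNReal.ofReal (gaussianPDFReal (((a:ℝ) / ((a:ℝ) + (b:ℝ))) * z) c x) := by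
      intro x
      rw [gaussianPDF, gaussianPDF, ← ENNReal.ofReal_mul (gaussianPDFReal_nonneg _ _ _),
        pdf_mul_pdf a b ha hb x z, ENNReal.ofReal_mul (gaussianPDFReal_nonneg _ _ _)]
    simp_rw [h1]
    rw [lintegral_const_mul _ (measurable_gaussianPDFReal _ _).ennreal_ofReal,
      lintegral_gaussianPDFReal_eq_one _ hcne, mul_one]
    rfl
  simp_rw [hinner]
  exact (gaussianReal_apply _ hab s).symm



lemma pi_gaussian_dot {n : ℕ} (v : ℝ≥0) (c : Fin n → ℝ) :
    Measure.map (fun ω : Fin n → ℝ => ∑ j, c j * ω j) (Measure.pi fun _ => gaussianReal 0 v)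
      = gaussianReal 0 ((∑ j, ((c j) ^ 2).toNNReal) * v) := by
  induction n with
  | zero =>
      have hv : ((∑ j : Fin 0, ((c j) ^ 2).toNNReal) * v) = 0 := by simp
      rw [hv]
      simp only [Finset.univ_eq_empty, Finset.sum_empty, gaussianReal_zero_var]
      rw [Measure.map_const, measure_univ, one_smul]
  | succ n ih =>
      have hmp := (measurePreserving_piFinSuccAbove (fun _ : Fin (n + 1) => gaussianReal 0 v) 0)
      set e := MeasurableEquiv.piFinSuccAbove (fun _ : Fin (n + 1) => ℝ) 0 with he
      have hpi : (Measure.pi fun _ : Fin (n + 1) => gaussianReal 0 v)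
          = Measure.map e.symm ((gaussianReal 0 v).prod (Measure.pi fun _ : Fin n => gaussianReal 0 v)) :=
        (hmp.symm _).map_eq.symm
      have hmeas_sum : Measurable fun ω : Fin (n + 1) → ℝ => ∑ j, c j * ω j :=
        Finset.measurable_sum _ fun j _ => (measurable_pi_apply j).const_mul _
      rw [hpi, Measure.map_map hmeas_sum e.symm.measurable]
      have hcomp : ((fun ω : Fin (n + 1) → ℝ => ∑ j, c j * ω j) ∘ e.symm)
          = (fun p : ℝ × ℝ => p.1 + p.2) ∘
            (Prod.map (fun x : ℝ => c 0 * x) (fun w : Fin n → ℝ => ∑ j, c j.succ * w j)) := by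
        funext p
        obtain ⟨x, w⟩ := p
        simp only [Function.comp_apply, he, MeasurableEquiv.piFinSuccAbove_symm_apply,
          Fin.insertNthEquiv, Equiv.coe_fn_mk, Fin.insertNth_zero, Prod.map_apply]
        rw [Fin.sum_univ_succ]
        simp [Fin.zero_succAbove, Fin.cons_zero, Fin.cons_succ]
      rw [hcomp, ← Measure.map_map measurable_add
        ((measurable_const_mul _).prodMap (Finset.measurable_sum _ fun j _ =>
          (measurable_pi_apply j).const_mul _)),
        ← Measure.map_prod_map _ _ (measurable_const_mul _)
          (Finset.measurable_sum _ fun j _ => (measurable_pi_apply j).const_mul _),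
        ih, gaussianReal_map_const_mul, mul_zero, gaussian_conv]
      congr 1
      rw [Fin.sum_univ_succ, add_mul]
      congr 2
      ext : 1
      simp [Real.coe_toNNReal _ (sq_nonneg (c 0))]

def rowEquiv (N P : ℕ) : (Fin P ⊕ (Fin N × Fin P)) ≃ (Fin (N + 1) × Fin P) where
  toFun := Sum.elim (fun j => ((0 : Fin (N + 1)), j)) (fun q => (q.1.succ, q.2))
  invFun := fun q => Fin.cases (Sum.inl q.2) (fun i' => Sum.inr (i', q.2)) q.1
  left_inv := by rintro (j | ⟨i, j⟩) <;> simp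
  right_inv := by
    rintro ⟨i, j⟩
    refine Fin.cases ?_ (fun i' => ?_) i <;> simp

lemma map_rows (P : ℕ) (ν : Measure ℝ) [IsProbabilityMeasure ν]
    (g : (Fin P → ℝ) → ℝ) (hg : Measurable g) (N : ℕ) :
    Measure.map (fun (ω : Fin N × Fin P → ℝ) (i : Fin N) => g (fun j => ω (i, j)))
        (Measure.pi fun _ => ν)
      = Measure.pi fun _ : Fin N => Measure.map g (Measure.pi fun _ : Fin P => ν) := by
  have hTN : ∀ M : ℕ, Measurable (fun (ω : Fin M × Fin P → ℝ) (i : Fin M) =>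
      g (fun j => ω (i, j))) := fun M => measurable_pi_lambda _ fun i =>
    hg.comp (measurable_pi_lambda _ fun j => measurable_pi_apply (i, j))
  induction N with
  | zero =>
      rw [Measure.pi_of_empty, Measure.pi_of_empty, Measure.map_dirac' (hTN 0)]
      congr 1
      exact Subsingleton.elim _ _
  | succ N ih =>
      set k := rowEquiv N P with hk
      have h1 : (Measure.pi fun _ : Fin (N + 1) × Fin P => ν)
          = Measure.map (MeasurableEquiv.piCongrLeft (fun _ => ℝ) k)
              (Measure.pi fun _ : Fin P ⊕ (Fin N × Fin P) => ν) :=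
        (measurePreserving_piCongrLeft (fun _ : Fin (N+1) × Fin P => ν) k).map_eq.symm
      have h2 : (Measure.pi fun _ : Fin P ⊕ (Fin N × Fin P) => ν)
          = Measure.map (MeasurableEquiv.sumPiEquivProdPi (fun _ => ℝ)).symm
              ((Measure.pi fun _ : Fin P => ν).prod (Measure.pi fun _ : Fin N × Fin P => ν)) :=
        (measurePreserving_sumPiEquivProdPi_symm (fun _ : Fin P ⊕ (Fin N × Fin P) => ν)).map_eq.symm
      rw [h1, h2, Measure.map_map (MeasurableEquiv.piCongrLeft (fun _ => ℝ) k).measurable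
        (MeasurableEquiv.sumPiEquivProdPi (fun _ => ℝ)).symm.measurable,
        Measure.map_map (hTN (N+1)) (((MeasurableEquiv.piCongrLeft (fun _ => ℝ) k).measurable).comp
          (MeasurableEquiv.sumPiEquivProdPi (fun _ => ℝ)).symm.measurable)]
      have hcomp : ((fun (ω : Fin (N+1) × Fin P → ℝ) (i : Fin (N+1)) => g (fun j => ω (i, j))) ∘
            ((MeasurableEquiv.piCongrLeft (fun _ => ℝ) k) ∘
              (MeasurableEquiv.sumPiEquivProdPi (fun _ => ℝ)).symm))
          = (fun p : ℝ × (Fin N → ℝ) => Fin.cons p.1 p.2) ∘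
            (Prod.map g (fun (ω : Fin N × Fin P → ℝ) (i : Fin N) => g (fun j => ω (i, j)))) := by
        funext p
        obtain ⟨v, ω⟩ := p
        funext i
        refine Fin.cases ?_ (fun i' => ?_) i
        · simp only [Function.comp_apply, Prod.map_apply, Fin.cons_zero]
          refine congrArg g (funext fun j => ?_)
          exact MeasurableEquiv.piCongrLeft_apply_apply k _ (Sum.inl j)
        · simp only [Function.comp_apply, Prod.map_apply, Fin.cons_succ]
          refine congrArg g (funext fun j => ?_)
          exact MeasurableEquiv.piCongrLeft_apply_apply k _ (Sum.inr (i', j))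
      have hcons : (fun p : ℝ × (Fin N → ℝ) => Fin.cons p.1 p.2)
          = ⇑(MeasurableEquiv.piFinSuccAbove (fun _ : Fin (N+1) => ℝ) 0).symm := by
        funext p
        exact (Fin.insertNth_zero' p.1 p.2).symm
      rw [hcons] at hcomp
      rw [hcomp, ← Measure.map_map
          (MeasurableEquiv.piFinSuccAbove (fun _ : Fin (N+1) => ℝ) 0).symm.measurable
          (hg.prodMap (hTN N)),
        ← Measure.map_prod_map _ _ hg (hTN N), ih,
        ((measurePreserving_piFinSuccAbove (fun _ : Fin (N+1) =>
          Measure.map g (Measure.pi fun _ : Fin P => ν)) 0).symm _).map_eq]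

variable {v : ℝ≥0} {s : ℝ}

lemma key_pdf (hv : v ≠ 0) (y : ℝ) :
    gaussianPDFReal 0 v y * Real.exp (s * y ^ 2)
      = (√(2 * π * v))⁻¹ * Real.exp (-((2 * (v:ℝ))⁻¹ - s) * y ^ 2) := by
  have hv' : (0:ℝ) < v := NNReal.coe_pos.mpr (pos_iff_ne_zero.mpr hv)
  rw [gaussianPDFReal, mul_assoc, ← Real.exp_add]
  congr 1
  field_simp
  ring

lemma integrable_exp_sq_gaussian (h : 2 * s * (v:ℝ) < 1) :
    Integrable (fun y => Real.exp (s * y ^ 2)) (gaussianReal 0 v) := by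
  by_cases hv : v = 0
  · rw [hv, gaussianReal_zero_var]
    refine (integrable_const (Real.exp (s * 0 ^ 2))).congr ?_
    rw [Filter.EventuallyEq, ae_dirac_eq]
    exact Filter.eventually_pure.2 rfl
  have hv' : (0:ℝ) < v := NNReal.coe_pos.mpr (pos_iff_ne_zero.mpr hv)
  have hb : (0:ℝ) < (2 * (v:ℝ))⁻¹ - s := by
    rw [sub_pos, inv_eq_one_div, lt_div_iff₀ (by linarith)]
    linarith [h]
  rw [gaussianReal_of_var_ne_zero _ hv, gaussianPDF_def]
  rw [integrable_withDensity_iff (measurable_gaussianPDFReal 0 v).ennreal_ofReal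
    (ae_of_all _ fun x => ENNReal.ofReal_lt_top)]
  have : (fun y => Real.exp (s * y ^ 2) * (ENNReal.ofReal (gaussianPDFReal 0 v y)).toReal)
      = fun y => (√(2 * π * v))⁻¹ * Real.exp (-((2 * (v:ℝ))⁻¹ - s) * y ^ 2) := by
    funext y
    rw [ENNReal.toReal_ofReal (gaussianPDFReal_nonneg 0 v y), mul_comm, key_pdf hv]
  rw [this]
  exact (integrable_exp_neg_mul_sq hb).const_mul _

lemma integral_exp_sq_gaussian (h : 2 * s * (v:ℝ) < 1) :
    ∫ y, Real.exp (s * y ^ 2) ∂(gaussianReal 0 v)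
      = (Real.sqrt (1 - 2 * s * v))⁻¹ := by
  by_cases hv : v = 0
  · simp [hv, gaussianReal_zero_var]
  have hv' : (0:ℝ) < v := NNReal.coe_pos.mpr (pos_iff_ne_zero.mpr hv)
  have hb : (0:ℝ) < (2 * (v:ℝ))⁻¹ - s := by
    rw [sub_pos, inv_eq_one_div, lt_div_iff₀ (by linarith)]
    linarith [h]
  have h1 : (0:ℝ) < 1 - 2 * s * v := by linarith
  set b : ℝ := (2 * (v:ℝ))⁻¹ - s with hbdef
  have hd : gaussianPDF 0 v = fun y => (((gaussianPDFReal 0 v y).toNNReal : ℝ≥0) : ℝ≥0∞) := rfl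
  rw [gaussianReal_of_var_ne_zero _ hv, hd,
    integral_withDensity_eq_integral_smul (measurable_gaussianPDFReal 0 v).real_toNNReal _]
  have : (fun y => (gaussianPDFReal 0 v y).toNNReal • Real.exp (s * y ^ 2))
      = fun y => (√(2 * π * v))⁻¹ * Real.exp (-b * y ^ 2) := by
    funext y
    rw [NNReal.smul_def, smul_eq_mul, Real.coe_toNNReal _ (gaussianPDFReal_nonneg 0 v y),
      key_pdf hv]
  rw [this, integral_const_mul, integral_gaussian]
  have h2 : π / b = 2 * π * (v:ℝ) / (1 - 2 * s * v) := by
    rw [div_eq_div_iff hb.ne' h1.ne', hbdef]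
    field_simp
  rw [h2, Real.sqrt_div (by positivity : (0:ℝ) ≤ 2 * π * v), div_eq_mul_inv, ← mul_assoc,
    inv_mul_cancel₀ (by positivity), one_mul]

lemma integral_pi_pow {α : Type} [MeasurableSpace α] {n : ℕ} (μ : Measure α) [SigmaFinite μ]
    (f : α → ℝ) :
    ∫ y : Fin n → α, ∏ i, f (y i) ∂(Measure.pi fun _ => μ) = (∫ x, f x ∂μ) ^ n := by
  letI : MeasureSpace α := ⟨μ⟩
  simpa using MeasureTheory.integral_fintype_prod_eq_pow (ι := Fin n) f (μ := μ)

lemma integrable_pi_prod {α : Type} [MeasurableSpace α] {n : ℕ} (μ : Measure α) [SigmaFinite μ]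
    (f : α → ℝ) (hf : Integrable f μ) :
    Integrable (fun y : Fin n → α => ∏ i, f (y i)) (Measure.pi fun _ => μ) := by
  letI : MeasureSpace α := ⟨μ⟩
  exact Integrable.fintype_prod (fun _ => hf)

lemma log_lower (u : ℝ) (hu : 0 ≤ u) : u / (1 + u) ≤ Real.log (1 + u) := by
  have h := Real.log_le_sub_one_of_pos (x := (1 + u)⁻¹) (by positivity)
  rw [Real.log_inv] at h
  have h2 : (1 + u)⁻¹ - 1 = -(u / (1 + u)) := by field_simp; ring
  rw [h2] at h
  linarith

lemma sqrt_eq_exp_half_log {x : ℝ} (hx : 0 < x) :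
    Real.sqrt x = Real.exp (Real.log x / 2) := by
  rw [← Real.log_sqrt hx.le, Real.exp_log (Real.sqrt_pos.mpr hx)]

lemma exp_sum_sq (t : ℝ) {n : ℕ} (y : Fin n → ℝ) :
    Real.exp (t * ∑ i, y i ^ 2) = ∏ i, Real.exp (t * y i ^ 2) := by
  rw [Finset.mul_sum, Real.exp_sum]

lemma mgf_sum_sq (N : ℕ) (w : ℝ≥0) {t : ℝ} (hlt : 2 * t * (w:ℝ) < 1) :
    mgf (fun y : Fin N → ℝ => ∑ i, y i ^ 2) (Measure.pi fun _ => gaussianReal 0 w) t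
      = ((Real.sqrt (1 - 2 * t * w))⁻¹) ^ N := by
  unfold mgf
  have : (fun y : Fin N → ℝ => Real.exp (t * ∑ i, y i ^ 2))
      = fun y => ∏ i, Real.exp (t * y i ^ 2) := by
    funext y; exact exp_sum_sq t y
  rw [this]
  have := integral_pi_pow (n := N) (gaussianReal 0 w) (fun z : ℝ => Real.exp (t * z ^ 2))
  rw [this, integral_exp_sq_gaussian hlt]

lemma integrable_exp_sum_sq (N : ℕ) (w : ℝ≥0) {t : ℝ} (hlt : 2 * t * (w:ℝ) < 1) :
    Integrable (fun y : Fin N → ℝ => Real.exp (t * ∑ i, y i ^ 2))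
      (Measure.pi fun _ => gaussianReal 0 w) := by
  have : (fun y : Fin N → ℝ => Real.exp (t * ∑ i, y i ^ 2))
      = fun y => ∏ i, Real.exp (t * y i ^ 2) := by
    funext y; exact exp_sum_sq t y
  rw [this]
  exact integrable_pi_prod _ (fun z : ℝ => Real.exp (t * z ^ 2))
    (integrable_exp_sq_gaussian hlt)

lemma chernoff_upper (N : ℕ) (w : ℝ≥0) (hw : w ≠ 0) (ε : ℝ) (hε : 0 ≤ ε) :
    (Measure.pi fun _ : Fin N => gaussianReal 0 w)
        {y | (1 + ε) * (N * w) ≤ ∑ i, y i ^ 2}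
      ≤ ENNReal.ofReal (Real.exp (-((N:ℝ) * (ε - Real.log (1 + ε)) / 2))) := by
  have hw' : (0:ℝ) < w := NNReal.coe_pos.mpr (pos_iff_ne_zero.mpr hw)
  have h1ε : (0:ℝ) < 1 + ε := by linarith
  set t : ℝ := ε / (2 * (1 + ε) * w) with htdef
  have ht : 0 ≤ t := by positivity
  have h2tw : 2 * t * w = ε / (1 + ε) := by
    rw [htdef]; field_simp
  have hlt : 2 * t * (w:ℝ) < 1 := by
    rw [h2tw, div_lt_one h1ε]; linarith
  have hch := measure_ge_le_exp_mul_mgf (μ := Measure.pi fun _ : Fin N => gaussianReal 0 w)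
    (X := fun y => ∑ i, y i ^ 2) ((1 + ε) * (N * w)) ht (integrable_exp_sum_sq N w hlt)
  rw [mgf_sum_sq N w hlt] at hch
  have hval : Real.exp (-t * ((1 + ε) * (N * w))) * ((Real.sqrt (1 - 2 * t * w))⁻¹) ^ N
      = Real.exp (-((N:ℝ) * (ε - Real.log (1 + ε)) / 2)) := by
    have h1 : 1 - 2 * t * (w:ℝ) = (1 + ε)⁻¹ := by
      rw [h2tw]; field_simp; ring
    have h2 : -t * ((1 + ε) * (N * w)) = -((N:ℝ) * ε / 2) := by
      rw [htdef]; field_simp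
    rw [h1, h2, Real.sqrt_inv, inv_inv, sqrt_eq_exp_half_log h1ε, ← Real.exp_nat_mul,
      ← Real.exp_add]
    congr 1
    ring
  rw [hval] at hch
  exact (ENNReal.le_ofReal_iff_toReal_le (measure_ne_top _ _) (Real.exp_pos _).le).mpr hch

lemma chernoff_lower (N : ℕ) (w : ℝ≥0) (hw : w ≠ 0) (ε : ℝ) (hε : 0 ≤ ε) :
    (Measure.pi fun _ : Fin N => gaussianReal 0 w)
        {y | ∑ i, y i ^ 2 ≤ (1 - ε) * (N * w)}
      ≤ ENNReal.ofReal (Real.exp (-((N:ℝ) * ε ^ 2 / 8))) := by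
  have hw' : (0:ℝ) < w := NNReal.coe_pos.mpr (pos_iff_ne_zero.mpr hw)
  set t : ℝ := -(ε / (4 * w)) with htdef
  have ht : t ≤ 0 := by rw [htdef]; simp; positivity
  have h2tw : 2 * t * w = -(ε / 2) := by
    rw [htdef]; field_simp; ring
  have hlt : 2 * t * (w:ℝ) < 1 := by rw [h2tw]; nlinarith
  have hch := measure_le_le_exp_mul_mgf (μ := Measure.pi fun _ : Fin N => gaussianReal 0 w)
    (X := fun y => ∑ i, y i ^ 2) ((1 - ε) * (N * w)) ht (integrable_exp_sum_sq N w hlt)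
  rw [mgf_sum_sq N w hlt] at hch
  have h1 : 1 - 2 * t * (w:ℝ) = 1 + ε / 2 := by rw [h2tw]; ring
  have h1' : (0:ℝ) < 1 + ε / 2 := by linarith
  have hval : Real.exp (-t * ((1 - ε) * (N * w))) * ((Real.sqrt (1 - 2 * t * w))⁻¹) ^ N
      = Real.exp ((N:ℝ) * (ε * (1 - ε) / 4 - Real.log (1 + ε / 2) / 2)) := by
    have h2 : -t * ((1 - ε) * (N * w)) = (N:ℝ) * (ε * (1 - ε) / 4) := by
      rw [htdef]; field_simp
    rw [h1, h2, sqrt_eq_exp_half_log h1', ← Real.exp_neg, ← Real.exp_nat_mul, ← Real.exp_add]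
    congr 1
    ring
  rw [hval] at hch
  have hlog := log_lower (ε / 2) (by positivity)
  have hexp : (N:ℝ) * (ε * (1 - ε) / 4 - Real.log (1 + ε / 2) / 2) ≤ -((N:ℝ) * ε ^ 2 / 8) := by
    have hN : (0:ℝ) ≤ N := Nat.cast_nonneg N
    have key : ε * (1 - ε) / 4 - Real.log (1 + ε / 2) / 2 ≤ -(ε ^ 2 / 8) := by
      have h3 : ε / 2 - ε ^ 2 / 4 ≤ (ε / 2) / (1 + ε / 2) := by
        rw [le_div_iff₀ h1']
        nlinarith
      nlinarith [h3.trans hlog]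
    nlinarith
  refine le_trans ((ENNReal.le_ofReal_iff_toReal_le (measure_ne_top _ _)
    (by positivity)).mpr hch) (ENNReal.ofReal_le_ofReal ?_)
  exact Real.exp_le_exp.mpr hexp

lemma log_upper_small {ε : ℝ} (h0 : 0 ≤ ε) (h1 : ε ≤ 1) :
    Real.log (1 + ε) ≤ ε - ε ^ 2 / 4 := by
  rw [Real.log_le_iff_le_exp (by linarith)]
  have hq := Real.quadratic_le_exp_of_nonneg (x := ε - ε ^ 2 / 4) (by nlinarith)
  nlinarith [sq_nonneg ε, sq_nonneg (1 - ε)]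

lemma log_upper_big {ε : ℝ} (h1 : 1 ≤ ε) :
    Real.log (1 + ε) ≤ 3 * ε / 4 := by
  rw [Real.log_le_iff_le_exp (by linarith)]
  have hq := Real.quadratic_le_exp_of_nonneg (x := 3 * ε / 4) (by linarith)
  nlinarith

end Stmt12

open Stmt12
open scoped NNReal ENNReal

/-- sub-exponential concentration for Gaussian measurement
matrices. -/
theorem stmt_12 {N P : ℕ} (hN : 1 ≤ N) (x : Fin P → ℝ) (hx : x ≠ 0) (ε : ℝ) (hε : 0 ≤ ε) :
    (ε ≤ 1 →
      gaussianMatrixMeasure N P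
          {ω | ε ≤ |norm2 ((Matrix.of fun i j => ω (i, j)).mulVec x) ^ 2 / norm2 x ^ 2 - 1|} ≤
        ENNReal.ofReal (2 * Real.exp (-(N * ε ^ 2 / 8)))) ∧
    (1 < ε →
      gaussianMatrixMeasure N P
          {ω | ε ≤ |norm2 ((Matrix.of fun i j => ω (i, j)).mulVec x) ^ 2 / norm2 x ^ 2 - 1|} ≤
        ENNReal.ofReal (2 * Real.exp (-(N * ε / 8)))) := by
  -- setup
  set X2 : ℝ := norm2 x ^ 2 with hX2def
  have hX2sum : X2 = ∑ j, x j ^ 2 := by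
    rw [hX2def, norm2, Real.sq_sqrt (Finset.sum_nonneg fun j _ => sq_nonneg _)]
  have hX2pos : 0 < X2 := by
    rw [hX2sum]
    obtain ⟨j, hj⟩ := Function.ne_iff.mp hx
    exact Finset.sum_pos' (fun i _ => sq_nonneg _) ⟨j, Finset.mem_univ j, by rw [← sq_abs]; exact pow_pos (abs_pos.mpr hj) 2⟩
  set V : ℝ≥0 := ∑ j, ((x j) ^ 2).toNNReal with hVdef
  have hVcoe : (V:ℝ) = X2 := by
    rw [hVdef, hX2sum, NNReal.coe_sum]
    exact Finset.sum_congr rfl fun j _ => Real.coe_toNNReal _ (sq_nonneg _)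
  set w : ℝ≥0 := V * (N : ℝ≥0)⁻¹ with hwdef
  have hNne : ((N : ℝ≥0)) ≠ 0 := by
    simp only [ne_eq, Nat.cast_eq_zero]
    omega
  have hwne : w ≠ 0 := by
    rw [hwdef]
    refine mul_ne_zero ?_ (by simp [hNne])
    intro hV0
    rw [← NNReal.coe_eq_zero] at hV0
    rw [hVcoe] at hV0
    exact hX2pos.ne' hV0
  have hNw : (N:ℝ) * (w:ℝ) = X2 := by
    rw [hwdef]
    push_cast
    rw [← mul_assoc]
    rw [mul_comm (N:ℝ) (V:ℝ), mul_assoc, mul_inv_cancel₀ (by exact_mod_cast hNne), mul_one, hVcoe]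
  -- the row map
  set g : (Fin P → ℝ) → ℝ := fun v => ∑ j, x j * v j with hgdef
  have hg : Measurable g := Finset.measurable_sum _ fun j _ => (measurable_pi_apply j).const_mul _
  set T : (Fin N × Fin P → ℝ) → (Fin N → ℝ) := fun ω i => g (fun j => ω (i, j)) with hTdef
  have hT : Measurable T := measurable_pi_lambda _ fun i =>
    hg.comp (measurable_pi_lambda _ fun j => measurable_pi_apply (i, j))
  have hlaw : Measure.map T (gaussianMatrixMeasure N P)
      = Measure.pi fun _ : Fin N => gaussianReal 0 w := by
    rw [hTdef, gaussianMatrixMeasure, map_rows P _ g hg N, pi_gaussian_dot]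
  -- event rewriting
  have hvec : ∀ ω : Fin N × Fin P → ℝ,
      (Matrix.of fun i j => ω (i, j)).mulVec x = T ω := by
    intro ω
    funext i
    simp only [Matrix.mulVec, dotProduct, Matrix.of_apply, hTdef, hgdef]
    exact Finset.sum_congr rfl fun j _ => mul_comm _ _
  set E : Set (Fin N → ℝ) := {y | ε ≤ |(∑ i, y i ^ 2) / X2 - 1|} with hEdef
  have hEmeas : MeasurableSet E := by
    refine measurableSet_le measurable_const ?_
    exact (((Finset.measurable_sum _ fun i _ => (measurable_pi_apply i).pow_const 2).div_const
      _).sub_const 1).abs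
  have hevent : {ω | ε ≤ |norm2 ((Matrix.of fun i j => ω (i, j)).mulVec x) ^ 2 / norm2 x ^ 2 - 1|}
      = T ⁻¹' E := by
    ext ω
    simp only [Set.mem_setOf_eq, Set.mem_preimage, hEdef, hvec ω, ← hX2def]
    rw [norm2, Real.sq_sqrt (Finset.sum_nonneg fun i _ => sq_nonneg _)]
  have hmap : gaussianMatrixMeasure N P (T ⁻¹' E)
      = (Measure.pi fun _ : Fin N => gaussianReal 0 w) E := by
    rw [← hlaw, Measure.map_apply hT hEmeas]
  -- inclusion in the two tails
  set E1 : Set (Fin N → ℝ) := {y | (1 + ε) * ((N:ℝ) * w) ≤ ∑ i, y i ^ 2} with hE1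
  set E2 : Set (Fin N → ℝ) := {y | ∑ i, y i ^ 2 ≤ (1 - ε) * ((N:ℝ) * w)} with hE2
  have hsub : E ⊆ E1 ∪ E2 := by
    intro y hy
    rw [hEdef, Set.mem_setOf_eq, le_abs] at hy
    rcases hy with h | h
    · left
      rw [le_sub_iff_add_le, le_div_iff₀ hX2pos] at h
      rw [hE1, Set.mem_setOf_eq, hNw]
      nlinarith
    · right
      have h' : (∑ i, y i ^ 2) / X2 ≤ 1 - ε := by linarith
      rw [div_le_iff₀ hX2pos] at h'
      rw [hE2, Set.mem_setOf_eq, hNw]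
      nlinarith
  have hbound : gaussianMatrixMeasure N P
        {ω | ε ≤ |norm2 ((Matrix.of fun i j => ω (i, j)).mulVec x) ^ 2 / norm2 x ^ 2 - 1|}
      ≤ ENNReal.ofReal (Real.exp (-((N:ℝ) * (ε - Real.log (1 + ε)) / 2)))
        + ENNReal.ofReal (Real.exp (-((N:ℝ) * ε ^ 2 / 8))) := by
    rw [hevent, hmap]
    refine le_trans (measure_mono hsub) (le_trans (measure_union_le E1 E2) ?_)
    exact add_le_add (chernoff_upper N w hwne ε hε) (chernoff_lower N w hwne ε hε)
  constructor
  · intro hε1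
    refine hbound.trans ?_
    rw [← ENNReal.ofReal_add (Real.exp_pos _).le (Real.exp_pos _).le]
    refine ENNReal.ofReal_le_ofReal ?_
    have h1 : Real.exp (-((N:ℝ) * (ε - Real.log (1 + ε)) / 2))
        ≤ Real.exp (-((N:ℝ) * ε ^ 2 / 8)) := by
      rw [Real.exp_le_exp]
      have := log_upper_small hε hε1
      have hN' : (0:ℝ) ≤ N := Nat.cast_nonneg N
      nlinarith
    push_cast
    nlinarith [Real.exp_pos (-((N:ℝ) * ε ^ 2 / 8))]
  · intro hε1
    refine hbound.trans ?_
    rw [← ENNReal.ofReal_add (Real.exp_pos _).le (Real.exp_pos _).le]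
    refine ENNReal.ofReal_le_ofReal ?_
    have hN' : (0:ℝ) ≤ N := Nat.cast_nonneg N
    have h1 : Real.exp (-((N:ℝ) * (ε - Real.log (1 + ε)) / 2))
        ≤ Real.exp (-((N:ℝ) * ε / 8)) := by
      rw [Real.exp_le_exp]
      have := log_upper_big hε1.le
      nlinarith
    have h2 : Real.exp (-((N:ℝ) * ε ^ 2 / 8)) ≤ Real.exp (-((N:ℝ) * ε / 8)) := by
      rw [Real.exp_le_exp]
      have hee : ε ≤ ε ^ 2 := by nlinarith
      nlinarith [mul_le_mul_of_nonneg_left hee hN']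
    push_cast
    nlinarith [Real.exp_pos (-((N:ℝ) * ε / 8))]
end
end

section
/- Let b > 0 and define f(a) = (1−a)²·e^{ba/(1−a)} for a ∈ [0,1). If b ≥ 2, then f(a) ≥ 1 for all a ∈ [0,1). If 0 < b < 2, then f(a) ≥ (b/2)²·e^{2−b} for all a ∈ [0,1). -/
/-- Let `b > 0` and define `f(a) = (1-a)^2 * exp (b*a/(1-a))` for
`a ∈ [0,1)`. If `b ≥ 2` then `f(a) ≥ 1` for all `a ∈ [0,1)`; if `0 < b < 2` then
`f(a) ≥ (b/2)^2 * exp (2-b)` for all `a ∈ [0,1)`. -/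
theorem stmt_13 (b : ℝ) (hb : 0 < b) :
    (2 ≤ b → ∀ a ∈ Set.Ico (0 : ℝ) 1, 1 ≤ (1 - a) ^ 2 * Real.exp (b * a / (1 - a))) ∧
    (b < 2 → ∀ a ∈ Set.Ico (0 : ℝ) 1,
      (b / 2) ^ 2 * Real.exp (2 - b) ≤ (1 - a) ^ 2 * Real.exp (b * a / (1 - a))) := by
  constructor
  · rintro hb2 a ⟨ha0, ha1⟩
    have ht : 0 < 1 - a := by linarith
    have hinv : 0 < (1 - a)⁻¹ := by positivity
    have hinv1 : 1 ≤ (1 - a)⁻¹ := by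
      rw [le_inv_comm₀ one_pos ht]; simp; linarith
    have hlog : Real.log ((1 - a)⁻¹) ≤ (1 - a)⁻¹ - 1 :=
      Real.log_le_sub_one_of_pos hinv
    have hfrac : a / (1 - a) = (1 - a)⁻¹ - 1 := by field_simp; ring
    have key : 2 * Real.log ((1 - a)⁻¹) ≤ b * a / (1 - a) := by
      have : b * a / (1 - a) = b * (a / (1 - a)) := by ring
      rw [this, hfrac]
      nlinarith
    have hexp : Real.exp (2 * Real.log ((1 - a)⁻¹)) ≤ Real.exp (b * a / (1 - a)) :=
      Real.exp_le_exp.mpr key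
    have h2 : Real.exp (2 * Real.log ((1 - a)⁻¹)) = ((1 - a)⁻¹) ^ 2 := by
      rw [show (2 : ℝ) * Real.log ((1 - a)⁻¹) = Real.log (((1 - a)⁻¹) ^ 2) by
        rw [Real.log_pow]; push_cast; ring,
        Real.exp_log (by positivity)]
    rw [h2] at hexp
    have : (1 - a) ^ 2 * ((1 - a)⁻¹) ^ 2 = 1 := by field_simp
    nlinarith [sq_nonneg (1 - a)]
  · rintro _ a ⟨ha0, ha1⟩
    have ht : 0 < 1 - a := by linarith
    set t := 1 - a with htdef
    have hs : 0 < b / (2 * t) := by positivity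
    have h1 : b / (2 * t) ≤ Real.exp (b / (2 * t) - 1) := by
      have := Real.add_one_le_exp (b / (2 * t) - 1); linarith
    have h2 : (b / (2 * t)) ^ 2 ≤ Real.exp (b / t - 2) := by
      have hmul := mul_le_mul h1 h1 hs.le (Real.exp_pos _).le
      rw [← Real.exp_add] at hmul
      have heq : b / (2 * t) - 1 + (b / (2 * t) - 1) = b / t - 2 := by
        field_simp; ring
      rw [heq] at hmul
      nlinarith
    have harg : b * a / t = (b / t - 2) + (2 - b) := by
      have : a = 1 - t := by rw [htdef]; ring
      rw [this]; field_simp; ring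
    rw [harg, Real.exp_add]
    have hbt : t ^ 2 * (b / (2 * t)) ^ 2 = (b / 2) ^ 2 := by
      field_simp
    nlinarith [Real.exp_pos (2 - b), sq_nonneg t, mul_le_mul_of_nonneg_left h2 (sq_nonneg t)]
end
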